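/- Let F be the distribution function of a nonnegative random variable with survival function F̄ regularly varying with index -α, α > 1. For fixed z ∈ (0,1) and β > 0, define V_β(zt) = ∫₀^{zt} ((1 - y/t)^{-β} - 1) dF(y). Then V_β(zt) ~ β t^{-1} μ(t) as t → ∞, where μ(t) = ∫₀^t x dF(x). -/

import Mathlib

open MeasureTheory Filter Set
open scoped ENNReal NNReal

private lemma VB_hasDerivAt (β : ℝ) {u : ℝ} (hu : u < 1) :
    HasDerivAt (fun v : ℝ => (1 - v) ^ (-β)) (β * (1 - u) ^ (-β - 1)) u := by
  have h1 : (1 : ℝ) - u ≠ 0 := by intro h; linarith [sub_eq_zero.mp h]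
  have h := (Real.hasDerivAt_rpow_const (x := 1 - u) (p := -β) (Or.inl h1)).comp u
    ((hasDerivAt_id u).const_sub 1)
  exact h.congr_deriv (by ring)

private lemma VB_key_ineq {z β u : ℝ} (hz1 : z < 1) (hβ : 0 < β)
    (hu0 : 0 ≤ u) (huz : u ≤ z) :
    0 ≤ (1 - u) ^ (-β) - 1 ∧ (1 - u) ^ (-β) - 1 ≤ β * (1 - z) ^ (-β - 1) * u := by
  have h1u : 0 < 1 - u := by linarith
  have h1z : 0 < 1 - z := by linarith
  constructor
  · have := Real.one_le_rpow_of_pos_of_le_one_of_nonpos h1u (by linarith)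
      (neg_nonpos.mpr hβ.le)
    linarith
  · rcases eq_or_lt_of_le hu0 with h | h
    · simp [← h, Real.one_rpow]
    · obtain ⟨c, hc, hslope⟩ := exists_hasDerivAt_eq_slope
        (fun v : ℝ => (1 - v) ^ (-β)) (fun v => β * (1 - v) ^ (-β - 1)) h
        (fun x hx => (VB_hasDerivAt β
          (lt_of_le_of_lt (hx.2.trans huz) hz1)).continuousAt.continuousWithinAt)
        (fun x hx => VB_hasDerivAt β (lt_of_le_of_lt (hx.2.le.trans huz) hz1))
      have hval : (1 - u) ^ (-β) - 1 = u * (β * (1 - c) ^ (-β - 1)) := by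
        rw [hslope]
        field_simp [Real.one_rpow]
        simp only [sub_zero, Real.one_rpow]; ring
      have hcz : (1 - c) ^ (-β - 1) ≤ (1 - z) ^ (-β - 1) :=
        Real.rpow_le_rpow_of_nonpos h1z (by linarith [hc.2.le.trans huz]) (by linarith)
      have hcpos : (0:ℝ) < (1 - c) ^ (-β - 1) :=
        Real.rpow_pos_of_pos (by linarith [hc.1, hc.2.le.trans huz]) _
      rw [hval]
      calc u * (β * (1 - c) ^ (-β - 1)) ≤ u * (β * (1 - z) ^ (-β - 1)) := by
            apply mul_le_mul_of_nonneg_left _ hu0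
            exact mul_le_mul_of_nonneg_left hcz hβ.le
        _ = β * (1 - z) ^ (-β - 1) * u := by ring

private lemma VB_ptwise (β : ℝ) (hβ : 0 < β) {y : ℝ} (hy : 0 ≤ y) :
    Tendsto (fun t : ℝ => t * ((1 - y / t) ^ (-β) - 1)) atTop (nhds (β * y)) := by
  rcases eq_or_lt_of_le hy with h | h
  · simp only [← h, zero_div, sub_zero, Real.one_rpow, sub_self, mul_zero]
    exact tendsto_const_nhds
  · have hd : HasDerivAt (fun v : ℝ => (1 - v) ^ (-β)) (β * (1 - 0) ^ (-β - 1)) 0 :=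
      VB_hasDerivAt β one_pos
    rw [hasDerivAt_iff_tendsto_slope] at hd
    have hyt : Tendsto (fun t : ℝ => y / t) atTop (nhdsWithin (0:ℝ) {0}ᶜ) := by
      apply tendsto_nhdsWithin_of_tendsto_nhds_of_eventually_within
      · exact tendsto_const_nhds.div_atTop tendsto_id
      · filter_upwards [eventually_gt_atTop 0] with t ht
        exact (div_pos h ht).ne'
    have h2 := (hd.comp hyt).const_mul y
    have heq : (fun t : ℝ => y * slope (fun v : ℝ => (1 - v) ^ (-β)) 0 (y / t))
        =ᶠ[atTop] fun t : ℝ => t * ((1 - y / t) ^ (-β) - 1) := by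
      filter_upwards [eventually_gt_atTop 0] with t ht
      have hyt0 : y / t ≠ 0 := (div_pos h ht).ne'
      rw [slope_def_field]
      simp only [sub_zero, Real.one_rpow]
      field_simp
    have hlim : y * (β * ((1:ℝ) - 0) ^ (-β - 1)) = β * y := by
      simp [Real.one_rpow]; ring
    rw [hlim] at h2
    exact h2.congr' heq

private lemma VB_finite_mean (μ : Measure ℝ) [IsProbabilityMeasure μ]
    (hsupp : μ (Iio 0) = 0) (α : ℝ) (hα : 1 < α)
    (hpos : ∀ t : ℝ, 0 < (μ (Ioi t)).toReal)
    (hrv2 : Tendsto (fun t : ℝ => (μ (Ioi (t * 2))).toReal / (μ (Ioi t)).toReal)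
      atTop (nhds ((2:ℝ) ^ (-α)))) :
    Integrable (fun y : ℝ => y) μ := by
  set r : ℝ := ((2:ℝ) ^ (-α) + 2⁻¹) / 2 with hr_def
  have haux : (2:ℝ) ^ (-α) < 2⁻¹ := by
    have h := Real.rpow_lt_rpow_of_exponent_lt (x := 2) one_lt_two (by linarith : -α < -1)
    simpa [Real.rpow_neg_one] using h
  have hrpos : 0 < (2:ℝ) ^ (-α) := Real.rpow_pos_of_pos two_pos _
  have hr0 : 0 < r := by positivity
  have h2r : 2 * r < 1 := by rw [hr_def]; linarith
  have hev : ∀ᶠ t in atTop, (μ (Ioi (t * 2))).toReal / (μ (Ioi t)).toReal < r :=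
    hrv2.eventually_lt_const (by rw [hr_def]; linarith)
  obtain ⟨T₀, hT₀⟩ := eventually_atTop.1 hev
  set T : ℝ := max T₀ 1 with hT_def
  have hT1 : (1:ℝ) ≤ T := le_max_right _ _
  have hTpos : (0:ℝ) < T := lt_of_lt_of_le one_pos hT1
  have step : ∀ t : ℝ, T ≤ t → (μ (Ioi (t * 2))).toReal ≤ r * (μ (Ioi t)).toReal := by
    intro t ht
    have := hT₀ t (le_trans (le_max_left _ _) ht)
    exact le_of_lt ((div_lt_iff₀ (hpos t)).mp this)
  have tail : ∀ n : ℕ, (μ (Ioi (2 ^ n * T))).toReal ≤ r ^ n * (μ (Ioi T)).toReal := by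
    intro n
    induction n with
    | zero => simp
    | succ m ih =>
      have hTm : T ≤ 2 ^ m * T := le_mul_of_one_le_left hTpos.le (one_le_pow₀ one_le_two)
      have h1 := step (2 ^ m * T) hTm
      have heq : (2:ℝ) ^ (m+1) * T = (2 ^ m * T) * 2 := by ring
      rw [heq]
      calc (μ (Ioi ((2 ^ m * T) * 2))).toReal ≤ r * (μ (Ioi (2 ^ m * T))).toReal := h1
        _ ≤ r * (r ^ m * (μ (Ioi T)).toReal) := by
            exact mul_le_mul_of_nonneg_left ih hr0.le
        _ = r ^ (m+1) * (μ (Ioi T)).toReal := by ring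
  have hprob : (μ (Ioi T)).toReal ≤ 1 := by
    simpa using ENNReal.toReal_mono ENNReal.one_ne_top (prob_le_one (μ := μ) (s := Ioi T))
  have tailE : ∀ n : ℕ, μ (Ioi (2 ^ n * T)) ≤ ENNReal.ofReal (r ^ n) := by
    intro n
    rw [← ENNReal.ofReal_toReal (measure_ne_top μ _)]
    apply ENNReal.ofReal_le_ofReal
    calc (μ (Ioi (2 ^ n * T))).toReal ≤ r ^ n * (μ (Ioi T)).toReal := tail n
      _ ≤ r ^ n * 1 := mul_le_mul_of_nonneg_left hprob (by positivity)
      _ = r ^ n := mul_one _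
  -- covering sets
  set A : ℕ → Set ℝ := fun n => match n with
    | 0 => Iic T
    | (m+1) => Ioc (2 ^ m * T) (2 ^ (m+1) * T) with hA_def
  have hcover : ∀ y : ℝ, ∃ n, y ∈ A n := by
    intro y
    by_cases h : y ≤ T
    · exact ⟨0, h⟩
    · push_neg at h
      have hex : ∃ n : ℕ, y ≤ 2 ^ n * T := by
        obtain ⟨n, hn⟩ := pow_unbounded_of_one_lt (y / T) (one_lt_two (α := ℝ))
        exact ⟨n, by rw [← div_le_iff₀ hTpos] at *; exact hn.le⟩
      set n := Nat.find hex with hn_def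
      have hspec : y ≤ 2 ^ n * T := Nat.find_spec hex
      have hn0 : n ≠ 0 := by
        intro h0
        rw [h0] at hspec
        simp at hspec
        linarith
      obtain ⟨m, hm⟩ : ∃ m, n = m + 1 := ⟨n - 1, (Nat.succ_pred_eq_of_pos (Nat.pos_of_ne_zero hn0)).symm⟩
      refine ⟨m + 1, ?_, by rw [← hm]; exact hspec⟩
      have := Nat.find_min hex (m := m) (by omega)
      push_neg at this
      exact this
  set q : ℝ≥0∞ := ENNReal.ofReal (2 * r) with hq_def
  have hq0 : q ≠ 0 := by
    rw [hq_def]; simp [ENNReal.ofReal_eq_zero]; linarith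
  have hq1 : q < 1 := by rw [hq_def]; exact ENNReal.ofReal_lt_one.mpr h2r
  have hqtop : q ≠ ⊤ := ENNReal.ofReal_ne_top
  set B : ℝ≥0∞ := ENNReal.ofReal (2 * T) * q⁻¹ with hB_def
  have hterm : ∀ n : ℕ, ∫⁻ y in A n, ‖y‖₊ ∂μ ≤ B * q ^ n := by
    intro n
    match n with
    | 0 =>
      have hsplit : (Iic T : Set ℝ) = Iio 0 ∪ Icc 0 T := by
        ext x
        simp only [mem_Iic, mem_union, mem_Iio, mem_Icc]
        constructor
        · intro hx; rcases lt_or_ge x 0 with h | h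
          · exact Or.inl h
          · exact Or.inr ⟨h, hx⟩
        · rintro (h | h)
          · linarith
          · exact h.2
      have : ∫⁻ y in A 0, ‖y‖₊ ∂μ ≤ ENNReal.ofReal T := by
        show ∫⁻ y in Iic T, (‖y‖₊ : ℝ≥0∞) ∂μ ≤ _
        rw [hsplit, lintegral_union measurableSet_Icc
          (by rw [Set.disjoint_left]; intro x hx hx2; exact absurd hx2.1 (not_le.mpr hx)),
          setLIntegral_measure_zero _ _ hsupp, zero_add]
        calc ∫⁻ y in Icc 0 T, (‖y‖₊ : ℝ≥0∞) ∂μ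
            ≤ ∫⁻ _ in Icc 0 T, ENNReal.ofReal T ∂μ := by
              apply setLIntegral_mono measurable_const
              intro x hx
              rw [← enorm_eq_nnnorm, Real.enorm_eq_ofReal_abs, abs_of_nonneg hx.1]
              exact ENNReal.ofReal_le_ofReal hx.2
          _ = ENNReal.ofReal T * μ (Icc 0 T) := setLIntegral_const _ _
          _ ≤ ENNReal.ofReal T * 1 := mul_le_mul_right prob_le_one _
          _ = ENNReal.ofReal T := mul_one _
      calc ∫⁻ y in A 0, ‖y‖₊ ∂μ ≤ ENNReal.ofReal T := this
        _ ≤ ENNReal.ofReal (2 * T) := ENNReal.ofReal_le_ofReal (by linarith)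
        _ ≤ ENNReal.ofReal (2 * T) * q⁻¹ :=
            le_mul_of_one_le_right zero_le (ENNReal.one_le_inv.mpr hq1.le)
        _ = B * q ^ 0 := by rw [pow_zero, mul_one]
    | (m+1) =>
      have hb : ∫⁻ y in A (m+1), ‖y‖₊ ∂μ
          ≤ ENNReal.ofReal (2 ^ (m+1) * T) * μ (Ioi (2 ^ m * T)) := by
        calc ∫⁻ y in A (m+1), (‖y‖₊ : ℝ≥0∞) ∂μ
            ≤ ∫⁻ _ in A (m+1), ENNReal.ofReal (2 ^ (m+1) * T) ∂μ := by
              apply setLIntegral_mono measurable_const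
              intro x hx
              have hx1 : 0 < x := lt_of_le_of_lt (by positivity) hx.1
              rw [← enorm_eq_nnnorm, Real.enorm_eq_ofReal_abs, abs_of_nonneg hx1.le]
              exact ENNReal.ofReal_le_ofReal hx.2
          _ = ENNReal.ofReal (2 ^ (m+1) * T) * μ (Ioc (2 ^ m * T) (2 ^ (m+1) * T)) :=
              setLIntegral_const _ _
          _ ≤ _ := mul_le_mul_right (measure_mono Ioc_subset_Ioi_self) _
      calc ∫⁻ y in A (m+1), ‖y‖₊ ∂μ
          ≤ ENNReal.ofReal (2 ^ (m+1) * T) * μ (Ioi (2 ^ m * T)) := hb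
        _ ≤ ENNReal.ofReal (2 ^ (m+1) * T) * ENNReal.ofReal (r ^ m) :=
            mul_le_mul_right (tailE m) _
        _ = ENNReal.ofReal (2 * T * (2 * r) ^ m) := by
            rw [← ENNReal.ofReal_mul (by positivity)]
            congr 1
            rw [mul_pow]
            ring
        _ = ENNReal.ofReal (2 * T) * q ^ m := by
            rw [ENNReal.ofReal_mul (by positivity), hq_def,
              ← ENNReal.ofReal_pow (by positivity)]
        _ = B * q ^ (m+1) := by
            rw [hB_def, pow_succ', mul_assoc, ← mul_assoc q⁻¹,
              ENNReal.inv_mul_cancel hq0 hqtop, one_mul]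
  have hfin : ∫⁻ y, (‖y‖₊ : ℝ≥0∞) ∂μ < ⊤ := by
    calc ∫⁻ y, (‖y‖₊ : ℝ≥0∞) ∂μ = ∫⁻ y in univ, (‖y‖₊ : ℝ≥0∞) ∂μ :=
        (setLIntegral_univ _).symm
      _ ≤ ∫⁻ y in ⋃ n, A n, (‖y‖₊ : ℝ≥0∞) ∂μ :=
        lintegral_mono_set (fun y _ => mem_iUnion.2 (hcover y))
      _ ≤ ∑' n, ∫⁻ y in A n, (‖y‖₊ : ℝ≥0∞) ∂μ := lintegral_iUnion_le _ _
      _ ≤ ∑' n : ℕ, B * q ^ n := ENNReal.tsum_le_tsum hterm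
      _ = B * (1 - q)⁻¹ := by rw [ENNReal.tsum_mul_left, ENNReal.tsum_geometric]
      _ < ⊤ := by
          apply ENNReal.mul_lt_top
          · rw [hB_def]
            exact ENNReal.mul_lt_top ENNReal.ofReal_lt_top
              (ENNReal.inv_ne_top.mpr hq0).lt_top
          · exact (ENNReal.inv_ne_top.mpr (tsub_pos_of_lt hq1).ne').lt_top
  exact ⟨measurable_id.aestronglyMeasurable, hfin⟩

theorem Vbeta_asymptotic (μ : Measure ℝ) [IsProbabilityMeasure μ] (hsupp : μ (Iio 0) = 0)
    (α : ℝ) (hα : 1 < α)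
    (hpos : ∀ t : ℝ, 0 < (μ (Ioi t)).toReal)
    (hrv : ∀ x : ℝ, 0 < x → Tendsto (fun t : ℝ =>
        (μ (Ioi (t * x))).toReal / (μ (Ioi t)).toReal) atTop (nhds (x ^ (-α))))
    (z β : ℝ) (hz : z ∈ Ioo (0 : ℝ) 1) (hβ : 0 < β) :
    Tendsto (fun t : ℝ =>
        (∫ y in Icc 0 (z * t), ((1 - y / t) ^ (-β) - 1) ∂μ)
          / (β * t⁻¹ * ∫ y in Iic t, y ∂μ)) atTop (nhds 1) := by
  obtain ⟨hz0, hz1⟩ := hz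
  have hae : ∀ᵐ y ∂μ, 0 ≤ y := by
    rw [ae_iff]
    convert hsupp using 2
    ext y
    simp [not_le]
  have hint : Integrable (fun y : ℝ => y) μ :=
    VB_finite_mean μ hsupp α hα hpos (hrv 2 two_pos)
  set M : ℝ := ∫ y, y ∂μ with hM_def
  have hMpos : 0 < M := by
    have h1 : (μ (Ioi 1)).toReal = ∫ _ in Ioi (1:ℝ), (1:ℝ) ∂μ := by
      rw [setIntegral_const, smul_eq_mul, mul_one]; rfl
    have h2 : ∫ _ in Ioi (1:ℝ), (1:ℝ) ∂μ ≤ ∫ y in Ioi (1:ℝ), y ∂μ := by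
      apply setIntegral_mono_on (integrableOn_const (measure_ne_top μ _))
        hint.integrableOn measurableSet_Ioi
      intro x hx
      exact (le_of_lt hx)
    have h3 : ∫ y in Ioi (1:ℝ), y ∂μ ≤ M := setIntegral_le_integral hint hae
    linarith [hpos 1]
  set C : ℝ := β * (1 - z) ^ (-β - 1) with hC_def
  have hCpos : 0 < C := by
    rw [hC_def]
    exact mul_pos hβ (Real.rpow_pos_of_pos (by linarith) _)
  have hbound_int : Integrable (fun y : ℝ => C * |y|) μ := (hint.abs).const_mul C
  -- numerator
  have hN : Tendsto (fun t : ℝ =>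
      ∫ y, (Icc 0 (z*t)).indicator (fun y => t * ((1 - y / t) ^ (-β) - 1)) y ∂μ)
      atTop (nhds (∫ y, β * y ∂μ)) := by
    apply tendsto_integral_filter_of_dominated_convergence (fun y => C * |y|)
    · apply Eventually.of_forall
      intro t
      apply AEStronglyMeasurable.indicator _ measurableSet_Icc
      exact (((measurable_const.sub (measurable_id.div_const t)).pow
        measurable_const).sub measurable_const).const_mul t |>.aestronglyMeasurable
    · filter_upwards [eventually_gt_atTop (0:ℝ)] with t ht
      apply Eventually.of_forall
      intro y
      by_cases hy : y ∈ Icc 0 (z*t)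
      · rw [indicator_of_mem hy]
        have hu0 : 0 ≤ y / t := div_nonneg hy.1 ht.le
        have huz : y / t ≤ z := (div_le_iff₀ ht).mpr (by linarith [hy.2])
        obtain ⟨hw0, hw1⟩ := VB_key_ineq hz1 hβ hu0 huz
        have hnn : 0 ≤ t * ((1 - y/t) ^ (-β) - 1) := mul_nonneg ht.le hw0
        rw [Real.norm_eq_abs, abs_of_nonneg hnn, abs_of_nonneg hy.1]
        calc t * ((1 - y/t) ^ (-β) - 1) ≤ t * (C * (y / t)) := by
              apply mul_le_mul_of_nonneg_left _ ht.le
              rw [hC_def]; exact hw1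
          _ = C * y := by field_simp
      · rw [indicator_of_notMem hy]
        simp only [norm_zero]
        positivity
    · exact hbound_int
    · filter_upwards [hae] with y hy
      have hev : (fun t : ℝ => t * ((1 - y / t) ^ (-β) - 1))
          =ᶠ[atTop] (fun t => (Icc 0 (z*t)).indicator
            (fun y => t * ((1 - y / t) ^ (-β) - 1)) y) := by
        filter_upwards [eventually_ge_atTop (y / z)] with t h1
        rw [indicator_of_mem]
        exact ⟨hy, by rw [div_le_iff₀ hz0] at h1; linarith⟩
      exact (VB_ptwise β hβ hy).congr' hev
  have hNlim : (∫ y, β * y ∂μ) = β * M := by rw [integral_const_mul]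
  have hN' : Tendsto (fun t : ℝ =>
      t * ∫ y in Icc 0 (z*t), ((1 - y / t) ^ (-β) - 1) ∂μ) atTop (nhds (β * M)) := by
    rw [← hNlim]
    apply hN.congr
    intro t
    rw [integral_indicator measurableSet_Icc, integral_const_mul]
  -- denominator
  have hD : Tendsto (fun t : ℝ => ∫ y in Iic t, y ∂μ) atTop (nhds M) := by
    have h : Tendsto (fun t : ℝ =>
        ∫ y, (Iic t).indicator (fun y : ℝ => y) y ∂μ) atTop (nhds (∫ y, y ∂μ)) := by
      apply tendsto_integral_filter_of_dominated_convergence (fun y => |y|)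
      · exact Eventually.of_forall fun t =>
          (measurable_id.indicator measurableSet_Iic).aestronglyMeasurable
      · apply Eventually.of_forall
        intro t
        apply Eventually.of_forall
        intro y
        by_cases hy : y ∈ Iic t
        · rw [indicator_of_mem hy]; exact le_refl _
        · rw [indicator_of_notMem hy]; simp
      · exact hint.abs
      · apply Eventually.of_forall
        intro y
        have : (fun t : ℝ => y) =ᶠ[atTop] fun t => (Iic t).indicator (fun y : ℝ => y) y := by
          filter_upwards [eventually_ge_atTop y] with t h1
          exact (indicator_of_mem (mem_Iic.mpr h1) (fun y : ℝ => y)).symm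
        exact tendsto_const_nhds.congr' this
    apply h.congr
    intro t
    rw [integral_indicator measurableSet_Iic]
  have hne : β * M ≠ 0 := (mul_pos hβ hMpos).ne'
  have hfin := hN'.div (hD.const_mul β) hne
  rw [div_self hne] at hfin
  apply hfin.congr
  intro t
  simp only [Pi.div_apply]
  conv_rhs => rw [show β * t⁻¹ * (∫ y in Iic t, y ∂μ)
      = t⁻¹ * (β * ∫ y in Iic t, y ∂μ) by ring,
    ← div_div, div_inv_eq_mul, mul_comm]
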